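/- Let f : ℝ^n → ℝ be differentiable with L-Lipschitz gradient, g : ℝ^n → ℝ convex, and F = f + g. Fix x, y ∈ ℝ^n, t > 0, and let p = prox_{tg}(x - t∇f(y)). Then for any z ∈ ℝ^n: F(z) - F(p) ≥ (1/(2t) - L/2)‖p - z‖² + (1/(2t))(‖x - p‖² - ‖x - z‖²) + ⟨p - z, ∇f(y) - ∇f(z)⟩. -/

import Mathlib

open scoped RealInnerProductSpace

theorem descent_aux (n : ℕ) (L : ℝ)
    (f : EuclideanSpace ℝ (Fin n) → ℝ) (f' : EuclideanSpace ℝ (Fin n) → EuclideanSpace ℝ (Fin n))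
    (hf : ∀ x, HasGradientAt f (f' x) x)
    (hlip : ∀ x y, ‖f' x - f' y‖ ≤ L * ‖x - y‖)
    (z p : EuclideanSpace ℝ (Fin n)) :
    f p ≤ f z + ⟪f' z, p - z⟫ + L / 2 * ‖p - z‖ ^ 2 := by
  set d := p - z with hd
  set φ : ℝ → ℝ := fun s => f (z + s • d) - s * ⟪f' z, d⟫ - L * s ^ 2 / 2 * ‖d‖ ^ 2 with hφ
  have hderiv : ∀ s : ℝ, HasDerivAt φ (⟪f' (z + s • d), d⟫ - ⟪f' z, d⟫ - L * s * ‖d‖ ^ 2) s := by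
    intro s
    have h1 : HasDerivAt (fun s : ℝ => z + s • d) d s := by
      simpa using ((hasDerivAt_id s).smul_const d).const_add z
    have h2 : HasDerivAt (fun s : ℝ => f (z + s • d)) ⟪f' (z + s • d), d⟫ s := by
      have := ((hf (z + s • d)).hasFDerivAt.comp_hasDerivAt s h1)
      simpa [InnerProductSpace.toDual_apply_apply, Function.comp_def] using this
    have h3 : HasDerivAt (fun s : ℝ => s * ⟪f' z, d⟫) ⟪f' z, d⟫ s := by
      simpa using (hasDerivAt_id s).mul_const ⟪f' z, d⟫
    have h4 : HasDerivAt (fun s : ℝ => L * s ^ 2 / 2 * ‖d‖ ^ 2) (L * s * ‖d‖ ^ 2) s := by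
      have : HasDerivAt (fun s : ℝ => s ^ 2) (2 * s) s := by
        simpa using hasDerivAt_pow 2 s
      have := ((this.const_mul L).div_const 2).mul_const (‖d‖ ^ 2)
      rw [show L * s * ‖d‖ ^ 2 = L * (2 * s) / 2 * ‖d‖ ^ 2 by ring]; exact this
    exact (h2.sub h3).sub h4
  have hanti : AntitoneOn φ (Set.Icc 0 1) := by
    apply antitoneOn_of_deriv_nonpos (convex_Icc 0 1)
    · exact fun s _ => ((hderiv s).continuousAt).continuousWithinAt
    · exact fun s _ => ((hderiv s).differentiableAt).differentiableWithinAt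
    · intro s hs
      rw [interior_Icc] at hs
      rw [(hderiv s).deriv]
      have h1 : ⟪f' (z + s • d) - f' z, d⟫ ≤ ‖f' (z + s • d) - f' z‖ * ‖d‖ :=
        real_inner_le_norm _ _
      have h2 : ‖f' (z + s • d) - f' z‖ ≤ L * (s * ‖d‖) := by
        have := hlip (z + s • d) z
        simpa [norm_smul, abs_of_pos hs.1, mul_assoc] using this
      have h3 : ⟪f' (z + s • d), d⟫ - ⟪f' z, d⟫ ≤ L * s * ‖d‖ ^ 2 := by
        rw [← inner_sub_left]
        calc ⟪f' (z + s • d) - f' z, d⟫ ≤ ‖f' (z + s • d) - f' z‖ * ‖d‖ := h1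
          _ ≤ L * (s * ‖d‖) * ‖d‖ := mul_le_mul_of_nonneg_right h2 (norm_nonneg _)
          _ = L * s * ‖d‖ ^ 2 := by ring
      linarith
  have hkey := hanti (Set.left_mem_Icc.2 zero_le_one) (Set.right_mem_Icc.2 zero_le_one) zero_le_one
  simp only [hφ] at hkey
  simp only [one_smul, zero_smul, add_zero, zero_mul] at hkey
  have hzd : z + d = p := by rw [hd]; abel
  rw [hzd] at hkey
  nlinarith [hkey]

theorem scalar_limit (A C : ℝ) (hC : 0 ≤ C)
    (key : ∀ s : ℝ, 0 < s → s ≤ 1 → 0 ≤ A + s * C) : 0 ≤ A := by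
  by_contra h
  push_neg at h
  rcases eq_or_lt_of_le hC with hC0 | hC0
  · have := key 1 one_pos le_rfl; nlinarith
  · have hs0 : (0:ℝ) < min 1 (-A / (2 * C)) :=
      lt_min one_pos (div_pos (by linarith) (by linarith))
    have := key _ hs0 (min_le_left _ _)
    have hsC : min 1 (-A / (2 * C)) * C ≤ -A / 2 := by
      have h1 : min 1 (-A / (2 * C)) ≤ -A / (2 * C) := min_le_right _ _
      have hmul := mul_le_mul_of_nonneg_right h1 hC
      have heq : -A / (2 * C) * C = -A / 2 := by field_simp
      linarith [heq ▸ hmul]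
    linarith

theorem gsub (n : ℕ)
    (g : EuclideanSpace ℝ (Fin n) → ℝ) (hg : ConvexOn ℝ Set.univ g)
    (u : EuclideanSpace ℝ (Fin n)) (t : ℝ) (ht : 0 < t)
    (p : EuclideanSpace ℝ (Fin n))
    (hp : ∀ w, g p + ‖p - u‖ ^ 2 / (2 * t) ≤ g w + ‖w - u‖ ^ 2 / (2 * t))
    (z : EuclideanSpace ℝ (Fin n)) :
    g p + (1 / t) * ⟪u - p, z - p⟫ ≤ g z := by
  have h2t : (0:ℝ) < 2 * t := by linarith
  have key : ∀ s : ℝ, 0 < s → s ≤ 1 →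
      0 ≤ (g z - g p - (1 / t) * ⟪u - p, z - p⟫) + s * (‖z - p‖ ^ 2 / (2 * t)) := by
    intro s hs0 hs1
    have hcv := hg.2 (Set.mem_univ p) (Set.mem_univ z) (by linarith : (0:ℝ) ≤ 1 - s)
      hs0.le (by ring)
    have hmin := hp ((1 - s) • p + s • z)
    have hexp : ‖(1 - s) • p + s • z - u‖ ^ 2
        = ‖p - u‖ ^ 2 - 2 * s * ⟪u - p, z - p⟫ + s ^ 2 * ‖z - p‖ ^ 2 := by
      have h0 : (1 - s) • p + s • z - u = (p - u) + s • (z - p) := by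
        simp [sub_smul, smul_sub]; abel
      have h1 : ⟪p - u, z - p⟫ = -⟪u - p, z - p⟫ := by
        rw [show p - u = -(u - p) by abel, inner_neg_left]
      rw [h0, norm_add_sq_real, real_inner_smul_right, norm_smul, h1]
      simp [mul_pow]
      ring
    have hcv' : g ((1 - s) • p + s • z) ≤ (1 - s) * g p + s * g z := by simpa using hcv
    have hI : g p + ‖p - u‖ ^ 2 / (2 * t) ≤ (1 - s) * g p + s * g z
        + (‖p - u‖ ^ 2 - 2 * s * ⟪u - p, z - p⟫ + s ^ 2 * ‖z - p‖ ^ 2) / (2 * t) := by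
      calc g p + ‖p - u‖ ^ 2 / (2 * t) ≤ _ := hmin
        _ ≤ _ := by rw [hexp]; exact add_le_add_left hcv' _
    set I : ℝ := ⟪u - p, z - p⟫
    set N : ℝ := ‖z - p‖ ^ 2
    have h1 : 0 ≤ s * (g z - g p) + (- 2 * s * I + s ^ 2 * N) / (2 * t) := by
      have hsplit : (‖p - u‖ ^ 2 - 2 * s * I + s ^ 2 * N) / (2 * t)
          = ‖p - u‖ ^ 2 / (2 * t) + (- 2 * s * I + s ^ 2 * N) / (2 * t) := by ring
      rw [hsplit] at hI
      linarith
    have h2 : 0 ≤ (g z - g p) + (- 2 * I + s * N) / (2 * t) := by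
      have hmul : 0 ≤ s * ((g z - g p) + (- 2 * I + s * N) / (2 * t)) := by
        have heq : s * ((g z - g p) + (- 2 * I + s * N) / (2 * t))
            = s * (g z - g p) + (- 2 * s * I + s ^ 2 * N) / (2 * t) := by ring
        rw [heq]; exact h1
      exact nonneg_of_mul_nonneg_right hmul hs0
    have heq2 : (- 2 * I + s * N) / (2 * t) = -(1 / t) * I + s * (N / (2 * t)) := by
      field_simp
    rw [heq2] at h2
    linarith
  have hC : 0 ≤ ‖z - p‖ ^ 2 / (2 * t) := by positivity
  have := scalar_limit _ _ hC key
  linarith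

theorem key_lemma_i (n : ℕ) (L : ℝ) (hL : 0 < L)
    (f : EuclideanSpace ℝ (Fin n) → ℝ) (f' : EuclideanSpace ℝ (Fin n) → EuclideanSpace ℝ (Fin n))
    (hf : ∀ x, HasGradientAt f (f' x) x)
    (hlip : ∀ x y, ‖f' x - f' y‖ ≤ L * ‖x - y‖)
    (g : EuclideanSpace ℝ (Fin n) → ℝ) (hg : ConvexOn ℝ Set.univ g)
    (x y : EuclideanSpace ℝ (Fin n)) (t : ℝ) (ht : 0 < t)
    (p : EuclideanSpace ℝ (Fin n))
    (hp : ∀ w, g p + ‖p - (x - t • f' y)‖ ^ 2 / (2 * t) ≤ g w + ‖w - (x - t • f' y)‖ ^ 2 / (2 * t))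
    (z : EuclideanSpace ℝ (Fin n)) :
    (f z + g z) - (f p + g p) ≥ (1 / (2 * t) - L / 2) * ‖p - z‖ ^ 2
      + (1 / (2 * t)) * (‖x - p‖ ^ 2 - ‖x - z‖ ^ 2) + ⟪p - z, f' y - f' z⟫ := by
  have hdesc := descent_aux n L f f' hf hlip z p
  have hgs := gsub n g hg (x - t • f' y) t ht p hp z
  -- expand the inner product in hgs
  have hu : (x - t • f' y) - p = (x - p) - t • f' y := by abel
  have hgs' : g p + (1 / t) * ⟪x - p, z - p⟫ - ⟪f' y, z - p⟫ ≤ g z := by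
    have h1 : ⟪(x - t • f' y) - p, z - p⟫ = ⟪x - p, z - p⟫ - t * ⟪f' y, z - p⟫ := by
      rw [hu, inner_sub_left, real_inner_smul_left]
    rw [h1] at hgs
    have ht' : t ≠ 0 := ne_of_gt ht
    have : (1 / t) * (⟪x - p, z - p⟫ - t * ⟪f' y, z - p⟫)
        = (1 / t) * ⟪x - p, z - p⟫ - ⟪f' y, z - p⟫ := by field_simp
    linarith [this ▸ hgs]
  -- norm identity: 2⟪x-p, z-p⟫ = ‖x-p‖² + ‖z-p‖² - ‖x-z‖²
  have hid : 2 * ⟪x - p, z - p⟫ = ‖x - p‖ ^ 2 + ‖z - p‖ ^ 2 - ‖x - z‖ ^ 2 := by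
    have h0 : (x - p) - (z - p) = x - z := by abel
    have := norm_sub_sq_real (x - p) (z - p)
    rw [h0] at this
    linarith
  have hnorm : ‖z - p‖ = ‖p - z‖ := by rw [← norm_neg]; congr 1; abel
  -- inner product manipulations
  have hin1 : ⟪f' z, p - z⟫ = -⟪f' z, z - p⟫ := by
    rw [show p - z = -(z - p) by abel, inner_neg_right]
  have hin2 : ⟪p - z, f' y - f' z⟫ = ⟪f' z, z - p⟫ - ⟪f' y, z - p⟫ := by
    rw [inner_sub_right, show z - p = -(p - z) by abel, inner_neg_right, inner_neg_right,
      real_inner_comm (f' z) (p - z), real_inner_comm (f' y) (p - z)]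
    ring
  have hdiv : (1 / t) * ⟪x - p, z - p⟫
      = (1 / (2 * t)) * (‖x - p‖ ^ 2 + ‖p - z‖ ^ 2 - ‖x - z‖ ^ 2) := by
    rw [← hnorm, ← hid]; ring
  rw [hdiv] at hgs'
  -- now combine
  nlinarith [hdesc, hgs', hin1, hin2]
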